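/- Under the setup where P̂ is the orthogonal projector onto the range of the block matrix [I_k; F] with F = p(Λ_{n∖k}) Ω_{n∖k} Ω_k† p(Λ_k)^{−1}, the cross term satisfies ‖diag(0, f(Λ_{n∖k})) · P̂‖_F ≤ ‖p(Λ_{n∖k}) Ω_{n∖k} Ω_k†‖_F · max_{1≤i≤k} |f(λ_i)/p(λ_i)|, provided ‖f(Λ_{n∖k})‖₂ ≤ min_{1≤i≤k}|f(λ_i)| holds in the sense used (i.e., eigenvalues ordered by |f|). -/

import Mathlib

open Matrix BigOperators

/-- Frobenius norm of a real matrix. -/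
noncomputable def frobNorm {m n : Type*} [Fintype m] [Fintype n] (M : Matrix m n ℝ) : ℝ :=
  Real.sqrt (∑ i, ∑ j, (M i j) ^ 2)

lemma trace_nonneg_of_psd {n : Type*} [Fintype n] [DecidableEq n]
    {A : Matrix n n ℝ} (hA : A.PosSemidef) : 0 ≤ A.trace := by
  rw [Matrix.trace]
  refine Finset.sum_nonneg fun i _ => ?_
  have h := hA.2 (Finsupp.single i 1)
  simpa using h

lemma frob_sq {n m : Type*} [Fintype n] [Fintype m] (M : Matrix n m ℝ) :
    ∑ i, ∑ j, (M i j) ^ 2 = (Mᵀ * M).trace := by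
  rw [Matrix.trace, Finset.sum_comm]
  simp [Matrix.mul_apply, Matrix.diag, sq]

/-- Cross-term bound: `‖diag(0, f(Λ_{n∖k})) P̂‖_F ≤ ‖p(Λ_{n∖k}) Ω_{n∖k} Ω_k†‖_F ·
max_i |f(λ_i)/p(λ_i)|`, where `P̂` projects onto `range([I; F])`. -/
theorem stmt10 {k m ℓ : ℕ} [NeZero k] (hℓ : k ≤ ℓ)
    (f : ℝ → ℝ) (p : Polynomial ℝ)
    (μ1 : Fin k → ℝ) (μ2 : Fin m → ℝ)
    (horder : ∀ j i, |f (μ2 j)| ≤ |f (μ1 i)|)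
    (hp : ∀ i, p.eval (μ1 i) ≠ 0)
    (Ωk : Matrix (Fin k) (Fin ℓ) ℝ) (Ω2 : Matrix (Fin m) (Fin ℓ) ℝ)
    (hrank : Ωk * (Ωkᵀ * (Ωk * Ωkᵀ)⁻¹) = 1) :
    let Ωdag : Matrix (Fin ℓ) (Fin k) ℝ := Ωkᵀ * (Ωk * Ωkᵀ)⁻¹
    let F : Matrix (Fin m) (Fin k) ℝ :=
      Matrix.diagonal (fun j => p.eval (μ2 j)) * Ω2 * Ωdag *
        (Matrix.diagonal (fun i => p.eval (μ1 i)))⁻¹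
    let G : Matrix (Fin k) (Fin k) ℝ := (1 + Fᵀ * F)⁻¹
    let Phat : Matrix (Fin k ⊕ Fin m) (Fin k ⊕ Fin m) ℝ :=
      Matrix.fromBlocks G (G * Fᵀ) (F * G) (F * G * Fᵀ)
    frobNorm (Matrix.fromBlocks 0 0 0 (Matrix.diagonal (fun j => f (μ2 j))) * Phat)
      ≤ frobNorm (Matrix.diagonal (fun j => p.eval (μ2 j)) * Ω2 * Ωdag) *
          (⨆ i : Fin k, |f (μ1 i) / p.eval (μ1 i)|) := by
  intro Ωdag F G Phat
  classical
  have hFdef : F = Matrix.diagonal (fun j => p.eval (μ2 j)) * Ω2 * Ωdag *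
      (Matrix.diagonal (fun i => p.eval (μ1 i)))⁻¹ := rfl
  have hGdef : G = (1 + Fᵀ * F)⁻¹ := rfl
  have hPdef : Phat = Matrix.fromBlocks G (G * Fᵀ) (F * G) (F * G * Fᵀ) := rfl
  set B : Matrix (Fin m) (Fin k) ℝ :=
    Matrix.diagonal (fun j => p.eval (μ2 j)) * Ω2 * Ωdag with hB
  set D2 : Matrix (Fin m) (Fin m) ℝ := Matrix.diagonal (fun j => f (μ2 j)) with hD2
  set C : ℝ := ⨆ i : Fin k, |f (μ1 i) / p.eval (μ1 i)| with hCdef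
  clear_value Phat G F B D2 C Ωdag
  -- positivity facts
  have hApsd : (Fᵀ * F).PosSemidef := by
    have := Matrix.posSemidef_conjTranspose_mul_self F
    simpa [Matrix.conjTranspose_eq_transpose_of_trivial] using this
  have hHpd : (1 + Fᵀ * F).PosDef := Matrix.PosDef.add_posSemidef Matrix.PosDef.one hApsd
  have hGH : G * (1 + Fᵀ * F) = 1 := by
    rw [hGdef]; exact Matrix.nonsing_inv_mul _ (Matrix.isUnit_iff_isUnit_det _ |>.mp hHpd.isUnit)
  have hHG : (1 + Fᵀ * F) * G = 1 := by
    rw [hGdef]; exact Matrix.mul_nonsing_inv _ (Matrix.isUnit_iff_isUnit_det _ |>.mp hHpd.isUnit)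
  have hGsymm : Gᵀ = G := by
    rw [hGdef, Matrix.transpose_nonsing_inv]
    congr 1
    simp [Matrix.transpose_add, Matrix.transpose_mul]
  -- 1 - G is PSD
  have h1G : (1 - G).PosSemidef := by
    have hK : (Fᵀ * F + (Fᵀ * F) * (Fᵀ * F)).PosSemidef := by
      refine hApsd.add ?_
      have := Matrix.posSemidef_conjTranspose_mul_self (Fᵀ * F)
      simpa [Matrix.conjTranspose_eq_transpose_of_trivial, Matrix.transpose_mul,
        Matrix.mul_assoc] using this
    have hcon := hK.mul_mul_conjTranspose_same G
    have hGHc : Gᴴ = G := by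
      rw [Matrix.conjTranspose_eq_transpose_of_trivial, hGsymm]
    rw [hGHc] at hcon
    have hfact : G * (Fᵀ * F + (Fᵀ * F) * (Fᵀ * F)) * G = 1 - G := by
      have h2 : Fᵀ * F + (Fᵀ * F) * (Fᵀ * F)
          = (1 + Fᵀ * F) * (1 + Fᵀ * F) - (1 + Fᵀ * F) := by noncomm_ring
      rw [h2, Matrix.mul_sub, Matrix.sub_mul, ← Matrix.mul_assoc, hGH, Matrix.one_mul,
        hHG, Matrix.one_mul]
    rwa [hfact] at hcon
  -- the product matrix
  have hX : Matrix.fromBlocks 0 0 0 D2 * Phat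
      = Matrix.fromBlocks 0 0 (D2 * F * G) (D2 * F * G * Fᵀ) := by
    rw [hPdef, Matrix.fromBlocks_multiply]
    simp [Matrix.mul_assoc]
  -- key trace bound
  have key : (∑ i, ∑ j, ((D2 * F * G) i j) ^ 2) + (∑ i, ∑ j, ((D2 * F * G * Fᵀ) i j) ^ 2)
      ≤ ∑ i, ∑ j, ((D2 * F) i j) ^ 2 := by
    rw [frob_sq, frob_sq, frob_sq]
    have e1 : (D2 * F * G)ᵀ * (D2 * F * G) = G * ((D2 * F)ᵀ * (D2 * F)) * G := by
      simp [Matrix.transpose_mul, hGsymm, Matrix.mul_assoc]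
    have e2 : ((D2 * F * G * Fᵀ)ᵀ * (D2 * F * G * Fᵀ)).trace
        = (G * ((D2 * F)ᵀ * (D2 * F)) * G * (Fᵀ * F)).trace := by
      have h3 : (D2 * F * G * Fᵀ)ᵀ * (D2 * F * G * Fᵀ)
          = F * (G * ((D2 * F)ᵀ * (D2 * F)) * G * Fᵀ) := by
        simp [Matrix.transpose_mul, hGsymm, Matrix.transpose_transpose, Matrix.mul_assoc]
      rw [h3, Matrix.trace_mul_comm]
      simp [Matrix.mul_assoc]
    rw [e1, e2]
    have e3 : (G * ((D2 * F)ᵀ * (D2 * F)) * G).trace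
          + (G * ((D2 * F)ᵀ * (D2 * F)) * G * (Fᵀ * F)).trace
        = (((D2 * F)ᵀ * (D2 * F)) * G).trace := by
      rw [← Matrix.trace_add]
      have : G * ((D2 * F)ᵀ * (D2 * F)) * G + G * ((D2 * F)ᵀ * (D2 * F)) * G * (Fᵀ * F)
          = G * ((D2 * F)ᵀ * (D2 * F)) * (G * (1 + Fᵀ * F)) := by
        rw [Matrix.mul_add, Matrix.mul_one, Matrix.mul_add]
        simp [Matrix.mul_assoc]
      rw [this, hGH, Matrix.mul_one, Matrix.trace_mul_comm]
    rw [e3]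
    have e4 : (((D2 * F)ᵀ * (D2 * F))).trace - ((((D2 * F)ᵀ * (D2 * F))) * G).trace
        = (D2 * F * (1 - G) * (D2 * F)ᵀ).trace := by
      have h4 : D2 * F * (1 - G) * (D2 * F)ᵀ
          = D2 * F * (D2 * F)ᵀ - D2 * F * G * (D2 * F)ᵀ := by
        rw [Matrix.mul_sub, Matrix.mul_one, Matrix.sub_mul]
      rw [h4, Matrix.trace_sub, Matrix.trace_mul_comm (D2 * F), Matrix.trace_mul_comm (D2 * F * G)]
      simp [Matrix.mul_assoc]
    have h5 : (D2 * F * (1 - G) * (D2 * F)ᵀ).PosSemidef := by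
      have := h1G.mul_mul_conjTranspose_same (D2 * F)
      simpa [Matrix.conjTranspose_eq_transpose_of_trivial] using this
    have h6 := trace_nonneg_of_psd h5
    linarith [e4 ▸ h6]
  -- entrywise bound on D2 * F
  have hp1inv : (Matrix.diagonal (fun i => p.eval (μ1 i)))⁻¹
      = Matrix.diagonal (fun i => (p.eval (μ1 i))⁻¹) := by
    refine Matrix.inv_eq_right_inv ?_
    rw [Matrix.diagonal_mul_diagonal]
    have h7 : (fun i => p.eval (μ1 i) * (p.eval (μ1 i))⁻¹) = fun _ => (1:ℝ) :=
      funext fun i => mul_inv_cancel₀ (hp i)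
    rw [h7, Matrix.diagonal_one]
  have hMentry : ∀ j i, (D2 * F) j i = B j i * (f (μ2 j) / p.eval (μ1 i)) := by
    intro j i
    rw [hFdef, hp1inv, hD2]
    rw [← Matrix.mul_assoc]
    simp [Matrix.mul_diagonal, Matrix.diagonal_mul, div_eq_mul_inv, ← hB]
    ring
  have hC0 : ∀ i, |f (μ1 i) / p.eval (μ1 i)| ≤ C := by
    intro i
    rw [hCdef]
    exact le_ciSup (f := fun i => |f (μ1 i) / p.eval (μ1 i)|) (Set.Finite.bddAbove (Set.finite_range _)) i
  have hCnn : 0 ≤ C := le_trans (abs_nonneg _) (hC0 ⟨0, Nat.pos_of_ne_zero (NeZero.ne k)⟩)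
  have hMB : ∑ j, ∑ i, ((D2 * F) j i) ^ 2 ≤ (∑ j, ∑ i, (B j i) ^ 2) * C ^ 2 := by
    rw [Finset.sum_mul]
    refine Finset.sum_le_sum fun j _ => ?_
    rw [Finset.sum_mul]
    refine Finset.sum_le_sum fun i _ => ?_
    rw [hMentry j i, mul_pow]
    refine mul_le_mul_of_nonneg_left ?_ (sq_nonneg _)
    have h1 : |f (μ2 j) / p.eval (μ1 i)| ≤ |f (μ1 i) / p.eval (μ1 i)| := by
      rw [abs_div, abs_div]
      have := horder j i
      gcongr
    calc (f (μ2 j) / p.eval (μ1 i)) ^ 2 = |f (μ2 j) / p.eval (μ1 i)| ^ 2 := (sq_abs _).symm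
      _ ≤ C ^ 2 := pow_le_pow_left₀ (abs_nonneg _) (h1.trans (hC0 i)) 2
  -- assemble
  rw [hX]
  unfold frobNorm
  have hblocks : ∑ i, ∑ j,
      ((Matrix.fromBlocks 0 0 (D2 * F * G) (D2 * F * G * Fᵀ)
        : Matrix (Fin k ⊕ Fin m) (Fin k ⊕ Fin m) ℝ) i j) ^ 2
      = (∑ i, ∑ j, ((D2 * F * G) i j) ^ 2) + ∑ i, ∑ j, ((D2 * F * G * Fᵀ) i j) ^ 2 := by
    rw [Fintype.sum_sum_type]
    simp [Fintype.sum_sum_type, Finset.sum_add_distrib]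
  rw [hblocks]
  calc Real.sqrt ((∑ i, ∑ j, ((D2 * F * G) i j) ^ 2) + ∑ i, ∑ j, ((D2 * F * G * Fᵀ) i j) ^ 2)
      ≤ Real.sqrt ((∑ j, ∑ i, (B j i) ^ 2) * C ^ 2) :=
        Real.sqrt_le_sqrt (key.trans hMB)
    _ = Real.sqrt (∑ j, ∑ i, (B j i) ^ 2) * C := by
        rw [Real.sqrt_mul (by positivity), Real.sqrt_sq hCnn]
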